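/- Each admissible β-polynomial has a unique positive real root, lying strictly between 1 and 2: let k ≥ 1 and let b_0, b_1, …, b_k ∈ {0,1} with b_0 = 1 and b_k = 1. Then the polynomial p(z) = z^{k+1} − b_0 z^k − b_1 z^{k−1} − ⋯ − b_{k−1} z − b_k has exactly one root in the positive reals, and this root lies in the open interval (1, 2). -/

import Mathlib

/-- each admissible β-polynomial
`p(z) = z^{k+1} - b_0 z^k - ⋯ - b_{k-1} z - b_k` (bits with `b_0 = b_k = 1`)
has exactly one positive real root, and this root lies in the open interval (1,2). -/
theorem beta_polynomial_unique_positive_root (k : ℕ) (hk : 1 ≤ k)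
    (b : ℕ → ℕ) (hb : ∀ j, j ≤ k → b j = 0 ∨ b j = 1) (hb0 : b 0 = 1) (hbk : b k = 1) :
    ∃ r : ℝ, 1 < r ∧ r < 2 ∧
      (r ^ (k+1) - ∑ j ∈ Finset.range (k+1), (b j : ℝ) * r ^ (k - j) = 0) ∧
      ∀ s : ℝ, 0 < s →
        s ^ (k+1) - ∑ j ∈ Finset.range (k+1), (b j : ℝ) * s ^ (k - j) = 0 → s = r := by
  set q : ℝ → ℝ := fun t => ∑ j ∈ Finset.range (k+1), (b j : ℝ) * t ^ (j+1) with hq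
  -- strict monotonicity on [0,∞)
  have hmono : StrictMonoOn q (Set.Ici (0:ℝ)) := by
    intro x hx y hy hxy
    apply Finset.sum_lt_sum
    · intro j _
      exact mul_le_mul_of_nonneg_left
        (pow_le_pow_left₀ hx hxy.le _) (Nat.cast_nonneg _)
    · refine ⟨0, Finset.mem_range.2 (Nat.succ_pos k), ?_⟩
      simp only [hb0, Nat.cast_one, one_mul, pow_one, zero_add]
      exact hxy
  -- continuity
  have hcont : Continuous q := by
    apply continuous_finset_sum
    intro j _
    exact continuous_const.mul (continuous_pow _)
  -- q (1/2) < 1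
  have hgeo : ∀ n : ℕ, ∑ j ∈ Finset.range n, ((2:ℝ)⁻¹) ^ (j+1) = 1 - (2:ℝ)⁻¹ ^ n := by
    intro n
    induction n with
    | zero => simp
    | succ m ih => rw [Finset.sum_range_succ, ih]; ring
  have hhalf : q (2⁻¹) < 1 := by
    have hle : q (2⁻¹) ≤ ∑ j ∈ Finset.range (k+1), ((2:ℝ)⁻¹) ^ (j+1) := by
      apply Finset.sum_le_sum
      intro j hj
      have hj' : j ≤ k := Nat.lt_succ_iff.mp (Finset.mem_range.mp hj)
      have : (b j : ℝ) ≤ 1 := by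
        rcases hb j hj' with h | h <;> simp [h]
      have hp : (0:ℝ) ≤ (2:ℝ)⁻¹ ^ (j+1) := by positivity
      nlinarith
    have : ∑ j ∈ Finset.range (k+1), ((2:ℝ)⁻¹) ^ (j+1) < 1 := by
      rw [hgeo]
      have : (0:ℝ) < (2:ℝ)⁻¹ ^ (k+1) := by positivity
      linarith
    linarith
  -- q 1 > 1
  have hone : 1 < q 1 := by
    have hsub : ({0, k} : Finset ℕ) ⊆ Finset.range (k+1) := by
      intro x hx
      simp only [Finset.mem_insert, Finset.mem_singleton] at hx
      rcases hx with h | h <;> simp [h, Nat.lt_succ_iff] <;> omega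
    have hge : ∑ j ∈ ({0, k} : Finset ℕ), (b j : ℝ) * 1 ^ (j+1) ≤ q 1 := by
      apply Finset.sum_le_sum_of_subset_of_nonneg hsub
      intro j _ _
      positivity
    have hne : (0:ℕ) ≠ k := by omega
    rw [Finset.sum_pair hne] at hge
    simp only [hb0, hbk, one_pow, Nat.cast_one, mul_one] at hge
    linarith
  -- IVT
  have h12 : ((2:ℝ)⁻¹) ≤ 1 := by norm_num
  have := intermediate_value_Ioo h12 hcont.continuousOn
  have hmem : (1:ℝ) ∈ Set.Ioo (q 2⁻¹) (q 1) := ⟨hhalf, hone⟩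
  obtain ⟨t, ht, hqt⟩ := this hmem
  obtain ⟨ht1, ht2⟩ := ht
  have ht0 : (0:ℝ) < t := by linarith [show (0:ℝ) < 2⁻¹ by norm_num]
  have key : ∀ s : ℝ, 0 < s →
        s ^ (k+1) - ∑ j ∈ Finset.range (k+1), (b j : ℝ) * s ^ (k - j)
          = s ^ (k+1) * (1 - q s⁻¹) := by
      intro s hs
      rw [mul_sub, mul_one, hq, Finset.mul_sum]
      congr 1
      apply Finset.sum_congr rfl
      intro j hj
      have hj' : j ≤ k := Nat.lt_succ_iff.mp (Finset.mem_range.mp hj)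
      have hpow : s ^ (k+1) * (s⁻¹) ^ (j+1) = s ^ (k-j) := by
        rw [inv_pow, show k + 1 = (k - j) + (j + 1) by omega, pow_add,
          mul_assoc, mul_inv_cancel₀ (pow_ne_zero _ hs.ne'), mul_one]
      calc (b j : ℝ) * s ^ (k-j) = (b j : ℝ) * (s ^ (k+1) * (s⁻¹) ^ (j+1)) := by rw [hpow]
        _ = s ^ (k+1) * ((b j : ℝ) * (s⁻¹) ^ (j+1)) := by ring
  refine ⟨t⁻¹, ?_, ?_, ?_, ?_⟩
  · rw [lt_inv_comm₀ one_pos ht0]; simpa using ht2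
  · rw [inv_lt_comm₀ ht0 two_pos]; exact ht1
  · have hr0 : (0:ℝ) < t⁻¹ := inv_pos.2 ht0
    rw [key _ hr0, inv_inv, hqt]
    ring
  · intro s hs hzero
    rw [key s hs] at hzero
    have hs1 : s ^ (k+1) ≠ 0 := pow_ne_zero _ hs.ne'
    have hqs : q s⁻¹ = 1 := by
      rcases mul_eq_zero.mp hzero with h | h
      · exact absurd h hs1
      · linarith
    have : s⁻¹ = t := by
      apply hmono.injOn (Set.mem_Ici.2 (inv_pos.2 hs).le) (Set.mem_Ici.2 ht0.le)
      rw [hqs, hqt]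
    rw [← this, inv_inv]
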